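/- Let G = F ⋈ Γ with F = ℤ/2 = ⟨t⟩, Γ = ℤ/4 × ℤ/2 = ⟨x⟩ × ⟨y⟩, and action x ◁ t = x, y ◁ t = x²y (so G ≅ ⟨x, y, t | x⁴ = y² = t² = 1, xy = yx, xt = tx, tyt = x²y⟩). Define ω: G³ → ℂ* by ω(t^q x^i y^j, t^r x^k y^l, t^s x^m y^n) = (−1)^{jks}. Then ω is a 3-cocycle on G, i.e., for all a, b, c, d ∈ G: ω(b, c, d) · ω(a, bc, d) · ω(a, b, c) = ω(ab, c, d) · ω(a, b, cd). -/

import Mathlib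

/-- The group `G = F ⋈ Γ` with `F = ℤ/2 = ⟨t⟩`, `Γ = ℤ/4 × ℤ/2 = ⟨x⟩ × ⟨y⟩` and action
`x ◁ t = x`, `y ◁ t = x²y`; the element `⟨q, i, j⟩` stands for `t^q x^i y^j`. -/
structure GA where
  q : ZMod 2
  i : ZMod 4
  j : ZMod 2
deriving DecidableEq, Fintype

namespace GA

/-- Group law: `(t^q x^i y^j)(t^r x^k y^l) = t^(q+r) x^(i+2rj+k) y^(j+l)`. -/
def gmul (a b : GA) : GA :=
  ⟨a.q + b.q, a.i + (if b.q = 1 ∧ a.j = 1 then 2 else 0) + b.i, a.j + b.j⟩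

def gone : GA := ⟨0, 0, 0⟩

def ginv (a : GA) : GA := ⟨a.q, -a.i - (if a.q = 1 ∧ a.j = 1 then 2 else 0), a.j⟩

lemma gmul_assoc : ∀ a b c : GA, gmul (gmul a b) c = gmul a (gmul b c) := by
  rintro ⟨q1, i1, j1⟩ ⟨q2, i2, j2⟩ ⟨q3, i3, j3⟩
  simp only [gmul, mk.injEq]
  refine ⟨add_assoc _ _ _, ?_, add_assoc _ _ _⟩
  have key : ∀ q2 q3 j1 j2 : ZMod 2,
      ((if q2 = 1 ∧ j1 = 1 then 2 else 0) + (if q3 = 1 ∧ j1 + j2 = 1 then 2 else 0) : ZMod 4) =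
        (if q2 + q3 = 1 ∧ j1 = 1 then 2 else 0) + (if q3 = 1 ∧ j2 = 1 then 2 else 0) := by
    decide
  have e : ∀ (a b c d x y z : ZMod 4), a + b = c + d → x + a + y + b + z = x + c + (y + d + z) := by
    intro a b c d x y z h; linear_combination h
  exact e _ _ _ _ _ _ _ (key q2 q3 j1 j2)

lemma gone_gmul : ∀ a : GA, gmul gone a = a := by
  rintro ⟨q, i, j⟩
  simp [gmul, gone]

lemma gmul_gone : ∀ a : GA, gmul a gone = a := by
  rintro ⟨q, i, j⟩
  simp [gmul, gone]

lemma ginv_gmul : ∀ a : GA, gmul (ginv a) a = gone := by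
  rintro ⟨q, i, j⟩
  simp only [gmul, ginv, gone, mk.injEq]
  have h2 : ∀ z : ZMod 2, z + z = 0 := by decide
  have h4 : ∀ (i c : ZMod 4), -i - c + c + i = 0 := by intro i c; ring
  exact ⟨h2 q, h4 _ _, h2 j⟩

instance : Group GA where
  mul := gmul
  one := gone
  inv := ginv
  mul_assoc := gmul_assoc
  one_mul := gone_gmul
  mul_one := gmul_gone
  inv_mul_cancel := ginv_gmul

end GA

def xA : GA := ⟨0, 1, 0⟩
def yA : GA := ⟨0, 0, 1⟩
def tA : GA := ⟨1, 0, 0⟩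

/-- `ω(t^q x^i y^j, t^r x^k y^l, t^s x^m y^n) = (−1)^(jks)`. -/
noncomputable def ωA (a b c : GA) : ℂˣ := (-1 : ℂˣ) ^ (a.j.val * b.i.val * c.q.val)


def eA (a b c : GA) : ZMod 2 := a.j * (b.i.val : ZMod 2) * c.q

noncomputable def χA (m : ZMod 2) : ℂˣ := (-1 : ℂˣ) ^ m.val

lemma chi_add (m n : ZMod 2) : χA (m + n) = χA m * χA n := by
  unfold χA; rw [← pow_add, ZMod.val_add]; nth_rw 2 [← Nat.mod_add_div (m.val + n.val) 2]
  rw [pow_add, pow_mul]; simp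

lemma omega_eq (a b c : GA) : ωA a b c = χA (eA a b c) := by
  obtain ⟨qa, ia, ja⟩ := a
  obtain ⟨qb, ib, jb⟩ := b
  obtain ⟨qc, ic, jc⟩ := c
  unfold ωA eA χA
  simp only
  rw [← Nat.mod_add_div (ja.val * ib.val * qc.val) 2, pow_add, pow_mul, neg_one_sq,
    one_pow, mul_one]
  congr 1
  fin_cases ja <;> fin_cases ib <;> fin_cases qc <;> rfl

def fA : ZMod 4 →+* ZMod 2 := ZMod.castHom (by norm_num : (2 : ℕ) ∣ 4) (ZMod 2)

lemma fA_val (i : ZMod 4) : (i.val : ZMod 2) = fA i := by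
  fin_cases i <;> decide

lemma e_cocycle : ∀ a b c d : GA,
    eA b c d + eA a (b * c) d + eA a b c = eA (a * b) c d + eA a b (c * d) := by
  rintro ⟨qa, ia, ja⟩ ⟨qb, ib, jb⟩ ⟨qc, ic, jc⟩ ⟨qd, id, jd⟩
  show eA _ _ _ + eA _ (GA.gmul _ _) _ + eA _ _ _ = eA (GA.gmul _ _) _ _ + eA _ _ (GA.gmul _ _)
  unfold eA GA.gmul
  simp only [fA_val, map_add]
  have hδ : fA (if qc = 1 ∧ jb = 1 then 2 else 0) = 0 := by split <;> decide
  rw [hδ]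
  ring

/-- The group `G = F ⋈ Γ` above satisfies the presentation
`⟨x, y, t | x⁴ = y² = t² = 1, xy = yx, xt = tx, tyt = x²y⟩` (with order 16), and the
function `ω(t^q x^i y^j, t^r x^k y^l, t^s x^m y^n) = (−1)^(jks)` is a 3-cocycle on `G`:
`ω(b,c,d) ω(a,bc,d) ω(a,b,c) = ω(ab,c,d) ω(a,b,cd)` for all `a, b, c, d ∈ G`. -/

theorem stmt_6 :
    (xA ^ 4 = 1 ∧ yA ^ 2 = 1 ∧ tA ^ 2 = 1 ∧ xA * yA = yA * xA ∧ xA * tA = tA * xA ∧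
      tA * yA * tA = xA ^ 2 * yA ∧ Subgroup.closure {xA, yA, tA} = ⊤ ∧
      Nat.card GA = 16) ∧
    ∀ a b c d : GA,
      ωA b c d * ωA a (b * c) d * ωA a b c = ωA (a * b) c d * ωA a b (c * d) := by
  constructor
  · refine ⟨by decide, by decide, by decide, by decide, by decide, by decide, ?_, ?_⟩
    · rw [eq_top_iff]
      rintro ⟨q, i, j⟩ -
      have hx : xA ∈ Subgroup.closure {xA, yA, tA} := Subgroup.subset_closure (by simp)
      have hy : yA ∈ Subgroup.closure {xA, yA, tA} := Subgroup.subset_closure (by simp)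
      have ht : tA ∈ Subgroup.closure {xA, yA, tA} := Subgroup.subset_closure (by simp)
      have h : (⟨q, i, j⟩ : GA) = tA ^ q.val * xA ^ i.val * yA ^ j.val := by
        fin_cases q <;> fin_cases i <;> fin_cases j <;> decide
      rw [h]
      exact mul_mem (mul_mem (pow_mem ht _) (pow_mem hx _)) (pow_mem hy _)
    · rw [Nat.card_eq_fintype_card]; decide
  · intro a b c d
    rw [omega_eq, omega_eq, omega_eq, omega_eq, omega_eq,
      ← chi_add, ← chi_add, ← chi_add, e_cocycle]
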